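/- arXiv:2009.13132 — 3 statements merged into one kernel-verified Lean document; each statement's English description precedes it below -/
import Mathlib

section
/- Let ν > 0 and p, q ∈ ℝ, and let u = (u₁,u₂,u₃) : ℝ² → ℝ³ be twice continuously differentiable with compact support, satisfying the projected divergence-free condition ∂₁(u₁ − p·u₃) + ∂₂(u₂ − q·u₃) = 0 on ℝ², and satisfying for each i = 1,2,3 the elliptic equation −ν[ (1+p²)∂₁²uᵢ + (1+q²)∂₂²uᵢ + 2pq ∂₁∂₂uᵢ ] + (u₁ − p·u₃)·∂₁uᵢ + (u₂ − q·u₃)·∂₂uᵢ = 0 everywhere on ℝ². Then u ≡ 0. -/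
open MeasureTheory

namespace Stmt8Aux

noncomputable section

abbrev X2 := EuclideanSpace ℝ (Fin 2)
abbrev X3 := EuclideanSpace ℝ (Fin 3)

/-- `f` has derivative `a` at `x` in direction `w`. -/
def HDer (f : X2 → ℝ) (x w : X2) (a : ℝ) : Prop :=
  ∃ L : X2 →L[ℝ] ℝ, HasFDerivAt f L x ∧ L w = a

theorem HDer.fderiv_eq {f : X2 → ℝ} {x w : X2} {a : ℝ} (h : HDer f x w a) :
    fderiv ℝ f x w = a := by
  obtain ⟨L, hL, hw⟩ := h
  rw [hL.fderiv]; exact hw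

theorem HDer.add {f g : X2 → ℝ} {x w : X2} {a b : ℝ} (hf : HDer f x w a) (hg : HDer g x w b) :
    HDer (fun y => f y + g y) x w (a + b) := by
  obtain ⟨L, hL, ha⟩ := hf; obtain ⟨M, hM, hb⟩ := hg
  exact ⟨L + M, hL.add hM, by simp [ha, hb]⟩

theorem HDer.sub {f g : X2 → ℝ} {x w : X2} {a b : ℝ} (hf : HDer f x w a) (hg : HDer g x w b) :
    HDer (fun y => f y - g y) x w (a - b) := by
  obtain ⟨L, hL, ha⟩ := hf; obtain ⟨M, hM, hb⟩ := hg
  exact ⟨L - M, hL.sub hM, by simp [ha, hb]⟩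

theorem HDer.mul {f g : X2 → ℝ} {x w : X2} {a b : ℝ} (hf : HDer f x w a) (hg : HDer g x w b) :
    HDer (fun y => f y * g y) x w (f x * b + g x * a) := by
  obtain ⟨L, hL, ha⟩ := hf; obtain ⟨M, hM, hb⟩ := hg
  exact ⟨f x • M + g x • L, hL.mul hM, by simp [ha, hb]⟩

theorem HDer.const_mul {f : X2 → ℝ} {x w : X2} {a : ℝ} (hf : HDer f x w a) (c : ℝ) :
    HDer (fun y => c * f y) x w (c * a) := by
  obtain ⟨L, hL, ha⟩ := hf
  exact ⟨c • L, hL.const_mul c, by simp [ha]⟩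

theorem hasFDerivAt_clm_comp {F G : Type*} [NormedAddCommGroup F] [NormedSpace ℝ F]
    [NormedAddCommGroup G] [NormedSpace ℝ G]
    {f : X2 → F} {x : X2} (T : F →L[ℝ] G) (hf : DifferentiableAt ℝ f x) :
    HasFDerivAt (fun y => T (f y)) (T.comp (fderiv ℝ f x)) x :=
  T.hasFDerivAt.comp x hf.hasFDerivAt

theorem contDiff_clm_comp {F G : Type*} [NormedAddCommGroup F] [NormedSpace ℝ F]
    [NormedAddCommGroup G] [NormedSpace ℝ G] {n : WithTop ℕ∞}
    {f : X2 → F} (T : F →L[ℝ] G) (hf : ContDiff ℝ n f) :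
    ContDiff ℝ n fun y => T (f y) :=
  T.contDiff.comp hf

/-- Divergence theorem for compactly supported `C¹` functions:
the integral of a directional derivative vanishes. -/
theorem integral_fderiv_eq_zero {F : X2 → ℝ} (hF : ContDiff ℝ 1 F)
    (hFs : HasCompactSupport F) (w : X2) :
    ∫ x, fderiv ℝ F x w = 0 := by
  obtain ⟨R, hR⟩ := hFs.isCompact.isBounded.subset_closedBall 0
  set r : ℝ := |R| + 1 with hr
  have hrpos : 0 < r := by positivity
  have hsub : tsupport F ⊆ Metric.closedBall 0 r := by
    refine hR.trans (Metric.closedBall_subset_closedBall ?_)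
    calc R ≤ |R| := le_abs_self R
    _ ≤ r := by rw [hr]; linarith
  set φ : ContDiffBump (0 : X2) :=
    { rIn := r + 1, rOut := r + 2, rIn_pos := by linarith, rIn_lt_rOut := by linarith }
  have hφ1 : ∀ y ∈ Metric.ball (0 : X2) (r + 1), φ y = 1 := fun y hy =>
    φ.one_of_mem_closedBall (Metric.ball_subset_closedBall hy)
  have hφc : ContDiff ℝ 1 (φ : X2 → ℝ) := φ.contDiff
  have hFd : Differentiable ℝ F := hF.differentiable one_ne_zero
  have hF'c : Continuous fun x => fderiv ℝ F x w :=
    (ContinuousLinearMap.apply ℝ ℝ w).continuous.comp (hF.continuous_fderiv one_ne_zero)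
  have hF's : HasCompactSupport fun x => fderiv ℝ F x w := hFs.fderiv_apply ℝ w
  have h1 : ∀ x, φ x * fderiv ℝ F x w = fderiv ℝ F x w := by
    intro x
    by_cases hx : x ∈ tsupport F
    · rw [hφ1 x (Metric.closedBall_subset_ball (by linarith) (hsub hx))]
      ring
    · rw [fderiv_of_notMem_tsupport ℝ hx]
      simp
  have h2 : ∀ x, fderiv ℝ (φ : X2 → ℝ) x w * F x = 0 := by
    intro x
    by_cases hx : x ∈ tsupport F
    · have hmem : x ∈ Metric.ball (0 : X2) (r + 1) :=
        Metric.closedBall_subset_ball (by linarith) (hsub hx)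
      have hev : (φ : X2 → ℝ) =ᶠ[nhds x] fun _ => (1 : ℝ) := by
        filter_upwards [Metric.isOpen_ball.mem_nhds hmem] with y hy using hφ1 y hy
      have : fderiv ℝ (φ : X2 → ℝ) x = fderiv ℝ (fun _ : X2 => (1 : ℝ)) x := hev.fderiv_eq
      rw [this, fderiv_const_apply]
      simp
    · rw [image_eq_zero_of_notMem_tsupport hx, mul_zero]
  have int1 : Integrable (fun x => φ x * fderiv ℝ F x w) := by
    rw [funext h1]
    exact hF'c.integrable_of_hasCompactSupport hF's
  have int2 : Integrable (fun x => fderiv ℝ (φ : X2 → ℝ) x w * F x) := by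
    rw [funext h2]
    exact integrable_zero _ _ _
  have int3 : Integrable (fun x => φ x * F x) :=
    (φ.continuous.mul hF.continuous).integrable_of_hasCompactSupport hFs.mul_left
  have key := integral_mul_fderiv_eq_neg_fderiv_mul_of_integrable int2 int1 int3
    (fun x _ => hφc.differentiable one_ne_zero x) (fun x _ => hFd x) (v := w)
  calc ∫ x, fderiv ℝ F x w = ∫ x, φ x * fderiv ℝ F x w := by rw [funext h1]
  _ = -∫ x, fderiv ℝ (φ : X2 → ℝ) x w * F x := key
  _ = 0 := by rw [funext h2]; simp

def W1 (ν p q : ℝ) (u : X2 → X3) : X2 → ℝ := fun y =>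
  2 * ν * (u y 0 * ((1 + p ^ 2) * fderiv ℝ u y (EuclideanSpace.single 0 1) 0 + p * q * fderiv ℝ u y (EuclideanSpace.single 1 1) 0) + u y 1 * ((1 + p ^ 2) * fderiv ℝ u y (EuclideanSpace.single 0 1) 1 + p * q * fderiv ℝ u y (EuclideanSpace.single 1 1) 1) + u y 2 * ((1 + p ^ 2) * fderiv ℝ u y (EuclideanSpace.single 0 1) 2 + p * q * fderiv ℝ u y (EuclideanSpace.single 1 1) 2)) - (u y 0 * u y 0 + u y 1 * u y 1 + u y 2 * u y 2) * (u y 0 - p * u y 2)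

def W2 (ν p q : ℝ) (u : X2 → X3) : X2 → ℝ := fun y =>
  2 * ν * (u y 0 * (p * q * fderiv ℝ u y (EuclideanSpace.single 0 1) 0 + (1 + q ^ 2) * fderiv ℝ u y (EuclideanSpace.single 1 1) 0) + u y 1 * (p * q * fderiv ℝ u y (EuclideanSpace.single 0 1) 1 + (1 + q ^ 2) * fderiv ℝ u y (EuclideanSpace.single 1 1) 1) + u y 2 * (p * q * fderiv ℝ u y (EuclideanSpace.single 0 1) 2 + (1 + q ^ 2) * fderiv ℝ u y (EuclideanSpace.single 1 1) 2)) - (u y 0 * u y 0 + u y 1 * u y 1 + u y 2 * u y 2) * (u y 1 - q * u y 2)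

def gfun (ν p q : ℝ) (u : X2 → X3) : X2 → ℝ := fun y =>
  2 * ν * ((fderiv ℝ u y (EuclideanSpace.single 0 1) 0 ^ 2 + fderiv ℝ u y (EuclideanSpace.single 1 1) 0 ^ 2 + (p * fderiv ℝ u y (EuclideanSpace.single 0 1) 0 + q * fderiv ℝ u y (EuclideanSpace.single 1 1) 0) ^ 2) + (fderiv ℝ u y (EuclideanSpace.single 0 1) 1 ^ 2 + fderiv ℝ u y (EuclideanSpace.single 1 1) 1 ^ 2 + (p * fderiv ℝ u y (EuclideanSpace.single 0 1) 1 + q * fderiv ℝ u y (EuclideanSpace.single 1 1) 1) ^ 2) + (fderiv ℝ u y (EuclideanSpace.single 0 1) 2 ^ 2 + fderiv ℝ u y (EuclideanSpace.single 1 1) 2 ^ 2 + (p * fderiv ℝ u y (EuclideanSpace.single 0 1) 2 + q * fderiv ℝ u y (EuclideanSpace.single 1 1) 2) ^ 2))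

end

end Stmt8Aux

open Stmt8Aux

set_option maxHeartbeats 2000000 in
/-- Proposition 4.1: the homogeneous Dirichlet problem for the elliptic part of
the projected Navier–Stokes system has only the trivial solution: if `u : ℝ² → ℝ³`
is `C²` with compact support, satisfies the projected divergence-free condition,
and solves `-ν[(1+p²)∂₁²uᵢ + (1+q²)∂₂²uᵢ + 2pq∂₁∂₂uᵢ]
+ (u₁ - p·u₃)∂₁uᵢ + (u₂ - q·u₃)∂₂uᵢ = 0` for each `i`, then `u ≡ 0`. -/
theorem stmt_8 (ν p q : ℝ) (hν : 0 < ν)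
    (u : EuclideanSpace ℝ (Fin 2) → EuclideanSpace ℝ (Fin 3))
    (hu : ContDiff ℝ 2 u) (hsupp : HasCompactSupport u)
    (hdiv : ∀ x : EuclideanSpace ℝ (Fin 2),
      (fderiv ℝ u x (EuclideanSpace.single 0 1) 0 -
          p * fderiv ℝ u x (EuclideanSpace.single 0 1) 2) +
        (fderiv ℝ u x (EuclideanSpace.single 1 1) 1 -
          q * fderiv ℝ u x (EuclideanSpace.single 1 1) 2) = 0)
    (hpde : ∀ x : EuclideanSpace ℝ (Fin 2), ∀ i : Fin 3,
      -ν * ((1 + p ^ 2) *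
            fderiv ℝ (fun y => fderiv ℝ u y (EuclideanSpace.single 0 1)) x
              (EuclideanSpace.single 0 1) i +
          (1 + q ^ 2) *
            fderiv ℝ (fun y => fderiv ℝ u y (EuclideanSpace.single 1 1)) x
              (EuclideanSpace.single 1 1) i +
          2 * p * q *
            fderiv ℝ (fun y => fderiv ℝ u y (EuclideanSpace.single 1 1)) x
              (EuclideanSpace.single 0 1) i) +
        (u x 0 - p * u x 2) * fderiv ℝ u x (EuclideanSpace.single 0 1) i +
        (u x 1 - q * u x 2) * fderiv ℝ u x (EuclideanSpace.single 1 1) i = 0) :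
    u = 0 := by
  classical
  have hud : Differentiable ℝ u := hu.differentiable two_ne_zero
  have hdu : ContDiff ℝ 1 (fderiv ℝ u) := hu.fderiv_right (by norm_num)
  have hdud : Differentiable ℝ (fderiv ℝ u) := hdu.differentiable one_ne_zero
  have hV : ∀ (x w : X2) (i : Fin 3), HDer (fun y => u y i) x w (fderiv ℝ u x w i) := by
    intro x w i
    exact ⟨(EuclideanSpace.proj i).comp (fderiv ℝ u x),
      hasFDerivAt_clm_comp (EuclideanSpace.proj i) (hud x), rfl⟩
  have hD : ∀ (x w : X2) (j : Fin 2) (i : Fin 3),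
      HDer (fun y => fderiv ℝ u y (EuclideanSpace.single j 1) i) x w
        (fderiv ℝ (fderiv ℝ u) x w (EuclideanSpace.single j 1) i) := by
    intro x w j i
    have hT := hasFDerivAt_clm_comp ((EuclideanSpace.proj i).comp (ContinuousLinearMap.apply ℝ X3
        (EuclideanSpace.single j 1))) (hdud x)
    exact ⟨_, hT, rfl⟩
  -- pointwise divergence identity
  have hdivW : ∀ x : X2, fderiv ℝ (W1 ν p q u) x (EuclideanSpace.single 0 1) +
      fderiv ℝ (W2 ν p q u) x (EuclideanSpace.single 1 1) = gfun ν p q u x := by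
    intro x
    have hsnd : ∀ j : Fin 2, HasFDerivAt (fun y => fderiv ℝ u y (EuclideanSpace.single j 1))
        ((ContinuousLinearMap.apply ℝ X3 (EuclideanSpace.single j 1)).comp
          (fderiv ℝ (fderiv ℝ u) x)) x :=
      fun j => hasFDerivAt_clm_comp (ContinuousLinearMap.apply ℝ X3
        (EuclideanSpace.single j 1)) (hdud x)
    have hsymv : fderiv ℝ (fderiv ℝ u) x (EuclideanSpace.single 0 1) (EuclideanSpace.single 1 1)
        = fderiv ℝ (fderiv ℝ u) x (EuclideanSpace.single 1 1) (EuclideanSpace.single 0 1) :=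
      (hu.contDiffAt.isSymmSndFDerivAt (by norm_num)) _ _
    have hp : ∀ i : Fin 3,
        ν * ((1 + p ^ 2) * fderiv ℝ (fderiv ℝ u) x (EuclideanSpace.single 0 1) (EuclideanSpace.single 0 1) i
          + (1 + q ^ 2) * fderiv ℝ (fderiv ℝ u) x (EuclideanSpace.single 1 1) (EuclideanSpace.single 1 1) i
          + 2 * p * q * fderiv ℝ (fderiv ℝ u) x (EuclideanSpace.single 1 1) (EuclideanSpace.single 0 1) i)
        = (u x 0 - p * u x 2) * fderiv ℝ u x (EuclideanSpace.single 0 1) i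
          + (u x 1 - q * u x 2) * fderiv ℝ u x (EuclideanSpace.single 1 1) i := by
      intro i
      have h := hpde x i
      rw [(hsnd 0).fderiv, (hsnd 1).fderiv] at h
      simp only [ContinuousLinearMap.coe_comp', Function.comp_apply,
        ContinuousLinearMap.apply_apply] at h
      rw [hsymv] at h
      linarith
    have H1 := HDer.sub (((((hV x (EuclideanSpace.single 0 1) 0).mul (((hD x (EuclideanSpace.single 0 1) 0 0).const_mul (1 + p ^ 2)).add ((hD x (EuclideanSpace.single 0 1) 1 0).const_mul (p * q)))).add ((hV x (EuclideanSpace.single 0 1) 1).mul (((hD x (EuclideanSpace.single 0 1) 0 1).const_mul (1 + p ^ 2)).add ((hD x (EuclideanSpace.single 0 1) 1 1).const_mul (p * q))))).add ((hV x (EuclideanSpace.single 0 1) 2).mul (((hD x (EuclideanSpace.single 0 1) 0 2).const_mul (1 + p ^ 2)).add ((hD x (EuclideanSpace.single 0 1) 1 2).const_mul (p * q))))).const_mul (2 * ν)) (((((hV x (EuclideanSpace.single 0 1) 0).mul (hV x (EuclideanSpace.single 0 1) 0)).add ((hV x (EuclideanSpace.single 0 1) 1).mul (hV x (EuclideanSpace.single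 0 1) 1))).add ((hV x (EuclideanSpace.single 0 1) 2).mul (hV x (EuclideanSpace.single 0 1) 2))).mul ((hV x (EuclideanSpace.single 0 1) 0).sub ((hV x (EuclideanSpace.single 0 1) 2).const_mul p)))
    have H2 := HDer.sub (((((hV x (EuclideanSpace.single 1 1) 0).mul (((hD x (EuclideanSpace.single 1 1) 0 0).const_mul (p * q)).add ((hD x (EuclideanSpace.single 1 1) 1 0).const_mul (1 + q ^ 2)))).add ((hV x (EuclideanSpace.single 1 1) 1).mul (((hD x (EuclideanSpace.single 1 1) 0 1).const_mul (p * q)).add ((hD x (EuclideanSpace.single 1 1) 1 1).const_mul (1 + q ^ 2))))).add ((hV x (EuclideanSpace.single 1 1) 2).mul (((hD x (EuclideanSpace.single 1 1) 0 2).const_mul (p * q)).add ((hD x (EuclideanSpace.single 1 1) 1 2).const_mul (1 + q ^ 2))))).const_mul (2 * ν)) (((((hV x (EuclideanSpace.single 1 1) 0).mul (hV x (EuclideanSpace.single 1 1) 0)).add ((hV x (EuclideanSpace.single 1 1) 1).mul (hV x (EuclideanSpace.single 1 1) 1))).add ((hV x (EuclideanSpace.single 1 1) 2).mul (hV x (EuclideanSpace.single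 1 1) 2))).mul ((hV x (EuclideanSpace.single 1 1) 1).sub ((hV x (EuclideanSpace.single 1 1) 2).const_mul q)))
    have eq1 : fderiv ℝ (W1 ν p q u) x (EuclideanSpace.single 0 1) = _ := H1.fderiv_eq
    have eq2 : fderiv ℝ (W2 ν p q u) x (EuclideanSpace.single 1 1) = _ := H2.fderiv_eq
    rw [eq1, eq2, hsymv]
    simp only [gfun]
    linear_combination (2 * u x 0) * hp 0 + (2 * u x 1) * hp 1 + (2 * u x 2) * hp 2 -
      (u x 0 * u x 0 + u x 1 * u x 1 + u x 2 * u x 2) * hdiv x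
  -- regularity and support of the fluxes
  have hVcd : ∀ i : Fin 3, ContDiff ℝ 1 fun y : X2 => u y i := fun i =>
    contDiff_clm_comp (EuclideanSpace.proj i) (hu.of_le one_le_two)
  have hDcd : ∀ (j : Fin 2) (i : Fin 3),
      ContDiff ℝ 1 fun y : X2 => fderiv ℝ u y (EuclideanSpace.single j 1) i := by
    intro j i
    have h := contDiff_clm_comp (n := 1) ((EuclideanSpace.proj i).comp
      (ContinuousLinearMap.apply ℝ X3 (EuclideanSpace.single j 1))) hdu
    exact h
  have hW1cd : ContDiff ℝ 1 (W1 ν p q u) := by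
    exact (contDiff_const.mul ((((hVcd 0).mul ((contDiff_const.mul (hDcd 0 0)).add
      (contDiff_const.mul (hDcd 1 0)))).add ((hVcd 1).mul ((contDiff_const.mul (hDcd 0 1)).add
      (contDiff_const.mul (hDcd 1 1))))).add ((hVcd 2).mul ((contDiff_const.mul (hDcd 0 2)).add
      (contDiff_const.mul (hDcd 1 2)))))).sub
      (((((hVcd 0).mul (hVcd 0)).add ((hVcd 1).mul (hVcd 1))).add
        ((hVcd 2).mul (hVcd 2))).mul ((hVcd 0).sub (contDiff_const.mul (hVcd 2))))
  have hW2cd : ContDiff ℝ 1 (W2 ν p q u) := by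
    exact (contDiff_const.mul ((((hVcd 0).mul ((contDiff_const.mul (hDcd 0 0)).add
      (contDiff_const.mul (hDcd 1 0)))).add ((hVcd 1).mul ((contDiff_const.mul (hDcd 0 1)).add
      (contDiff_const.mul (hDcd 1 1))))).add ((hVcd 2).mul ((contDiff_const.mul (hDcd 0 2)).add
      (contDiff_const.mul (hDcd 1 2)))))).sub
      (((((hVcd 0).mul (hVcd 0)).add ((hVcd 1).mul (hVcd 1))).add
        ((hVcd 2).mul (hVcd 2))).mul ((hVcd 1).sub (contDiff_const.mul (hVcd 2))))
  have hgc : Continuous (gfun ν p q u) := by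
    have hdc : ∀ (j : Fin 2) (i : Fin 3),
        Continuous fun y : X2 => fderiv ℝ u y (EuclideanSpace.single j 1) i :=
      fun j i => (hDcd j i).continuous
    exact continuous_const.mul (((((hdc 0 0).pow 2).add ((hdc 1 0).pow 2)).add
      (((continuous_const.mul (hdc 0 0)).add (continuous_const.mul (hdc 1 0))).pow 2)).add
      ((((hdc 0 1).pow 2).add ((hdc 1 1).pow 2)).add
      (((continuous_const.mul (hdc 0 1)).add (continuous_const.mul (hdc 1 1))).pow 2)) |>.add
      ((((hdc 0 2).pow 2).add ((hdc 1 2).pow 2)).add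
      (((continuous_const.mul (hdc 0 2)).add (continuous_const.mul (hdc 1 2))).pow 2)))
  have hzero : ∀ x : X2, x ∉ tsupport u → (∀ i : Fin 3, u x i = 0) ∧
      (∀ (j : Fin 2) (i : Fin 3), fderiv ℝ u x (EuclideanSpace.single j 1) i = 0) := by
    intro x hx
    have h0 : u x = 0 := image_eq_zero_of_notMem_tsupport hx
    have h1 : fderiv ℝ u x = 0 := fderiv_of_notMem_tsupport ℝ hx
    constructor
    · intro i; rw [h0]; rfl
    · intro j i; rw [h1]; rfl
  have hW1s : HasCompactSupport (W1 ν p q u) := by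
    apply HasCompactSupport.intro hsupp
    intro x hx
    obtain ⟨h0, h1⟩ := hzero x hx
    simp [W1, h0 0, h0 1, h0 2, h1 0 0, h1 0 1, h1 0 2, h1 1 0, h1 1 1, h1 1 2]
  have hW2s : HasCompactSupport (W2 ν p q u) := by
    apply HasCompactSupport.intro hsupp
    intro x hx
    obtain ⟨h0, h1⟩ := hzero x hx
    simp [W2, h0 0, h0 1, h0 2, h1 0 0, h1 0 1, h1 0 2, h1 1 0, h1 1 1, h1 1 2]
  have hgs : HasCompactSupport (gfun ν p q u) := by
    apply HasCompactSupport.intro hsupp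
    intro x hx
    obtain ⟨h0, h1⟩ := hzero x hx
    simp [gfun, h1 0 0, h1 0 1, h1 0 2, h1 1 0, h1 1 1, h1 1 2]
  -- integrate
  have hint1 : Integrable fun x : X2 => fderiv ℝ (W1 ν p q u) x (EuclideanSpace.single 0 1) :=
    ((ContinuousLinearMap.apply ℝ ℝ (EuclideanSpace.single 0 1)).continuous.comp
      (hW1cd.continuous_fderiv one_ne_zero)).integrable_of_hasCompactSupport
      (hW1s.fderiv_apply ℝ _)
  have hint2 : Integrable fun x : X2 => fderiv ℝ (W2 ν p q u) x (EuclideanSpace.single 1 1) :=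
    ((ContinuousLinearMap.apply ℝ ℝ (EuclideanSpace.single 1 1)).continuous.comp
      (hW2cd.continuous_fderiv one_ne_zero)).integrable_of_hasCompactSupport
      (hW2s.fderiv_apply ℝ _)
  have hgint : Integrable (gfun ν p q u) := hgc.integrable_of_hasCompactSupport hgs
  have hgI : ∫ x : X2, gfun ν p q u x = 0 := by
    have hfe : (fun x : X2 => fderiv ℝ (W1 ν p q u) x (EuclideanSpace.single 0 1) +
        fderiv ℝ (W2 ν p q u) x (EuclideanSpace.single 1 1)) = gfun ν p q u := funext hdivW
    rw [← hfe, integral_add hint1 hint2,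
      Stmt8Aux.integral_fderiv_eq_zero hW1cd hW1s _,
      Stmt8Aux.integral_fderiv_eq_zero hW2cd hW2s _]
    ring
  have hgnn : ∀ x : X2, 0 ≤ gfun ν p q u x := by
    intro x
    have h2 : (0:ℝ) ≤ 2 * ν := by linarith
    simp only [gfun]
    positivity
  have hg0 : gfun ν p q u = 0 := by
    have hae := (integral_eq_zero_iff_of_nonneg hgnn hgint).mp hgI
    exact (hgc.ae_eq_iff_eq volume continuous_const).mp hae
  -- derivatives vanish everywhere
  have hdz : ∀ (x : X2) (j : Fin 2), fderiv ℝ u x (EuclideanSpace.single j 1) = 0 := by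
    intro x j
    have h := congrFun hg0 x
    simp only [gfun, Pi.zero_apply] at h
    have hνne : (2 * ν : ℝ) ≠ 0 := by positivity
    have hS := (mul_eq_zero.mp h).resolve_left hνne
    have e00 : fderiv ℝ u x (EuclideanSpace.single 0 1) 0 = 0 := by
      have hsq : fderiv ℝ u x (EuclideanSpace.single 0 1) 0 ^ 2 = 0 :=
        le_antisymm (by nlinarith [sq_nonneg (fderiv ℝ u x (EuclideanSpace.single 1 1) 0), sq_nonneg ((p * fderiv ℝ u x (EuclideanSpace.single 0 1) 0 + q * fderiv ℝ u x (EuclideanSpace.single 1 1) 0)), sq_nonneg (fderiv ℝ u x (EuclideanSpace.single 0 1) 1), sq_nonneg (fderiv ℝ u x (EuclideanSpace.single 1 1) 1), sq_nonneg ((p * fderiv ℝ u x (EuclideanSpace.single 0 1) 1 + q * fderiv ℝ u x (EuclideanSpace.single 1 1) 1)), sq_nonneg (fderiv ℝ u x (EuclideanSpace.single 0 1) 2), sq_nonneg (fderiv ℝ u x (EuclideanSpace.single 1 1) 2), sq_nonneg ((p * fderiv ℝ u x (EuclideanSpace.single 0 1) 2 + q * fderiv ℝ u x (EuclideanSpace.single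 1 1) 2))]) (sq_nonneg _)
      exact pow_eq_zero_iff two_ne_zero |>.mp hsq
    have e01 : fderiv ℝ u x (EuclideanSpace.single 0 1) 1 = 0 := by
      have hsq : fderiv ℝ u x (EuclideanSpace.single 0 1) 1 ^ 2 = 0 :=
        le_antisymm (by nlinarith [sq_nonneg (fderiv ℝ u x (EuclideanSpace.single 0 1) 0), sq_nonneg (fderiv ℝ u x (EuclideanSpace.single 1 1) 0), sq_nonneg ((p * fderiv ℝ u x (EuclideanSpace.single 0 1) 0 + q * fderiv ℝ u x (EuclideanSpace.single 1 1) 0)), sq_nonneg (fderiv ℝ u x (EuclideanSpace.single 1 1) 1), sq_nonneg ((p * fderiv ℝ u x (EuclideanSpace.single 0 1) 1 + q * fderiv ℝ u x (EuclideanSpace.single 1 1) 1)), sq_nonneg (fderiv ℝ u x (EuclideanSpace.single 0 1) 2), sq_nonneg (fderiv ℝ u x (EuclideanSpace.single 1 1) 2), sq_nonneg ((p * fderiv ℝ u x (EuclideanSpace.single 0 1) 2 + q * fderiv ℝ u x (EuclideanSpace.single 1 1) 2))]) (sq_nonneg _)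
      exact pow_eq_zero_iff two_ne_zero |>.mp hsq
    have e02 : fderiv ℝ u x (EuclideanSpace.single 0 1) 2 = 0 := by
      have hsq : fderiv ℝ u x (EuclideanSpace.single 0 1) 2 ^ 2 = 0 :=
        le_antisymm (by nlinarith [sq_nonneg (fderiv ℝ u x (EuclideanSpace.single 0 1) 0), sq_nonneg (fderiv ℝ u x (EuclideanSpace.single 1 1) 0), sq_nonneg ((p * fderiv ℝ u x (EuclideanSpace.single 0 1) 0 + q * fderiv ℝ u x (EuclideanSpace.single 1 1) 0)), sq_nonneg (fderiv ℝ u x (EuclideanSpace.single 0 1) 1), sq_nonneg (fderiv ℝ u x (EuclideanSpace.single 1 1) 1), sq_nonneg ((p * fderiv ℝ u x (EuclideanSpace.single 0 1) 1 + q * fderiv ℝ u x (EuclideanSpace.single 1 1) 1)), sq_nonneg (fderiv ℝ u x (EuclideanSpace.single 1 1) 2), sq_nonneg ((p * fderiv ℝ u x (EuclideanSpace.single 0 1) 2 + q * fderiv ℝ u x (EuclideanSpace.single 1 1) 2))]) (sq_nonneg _)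
      exact pow_eq_zero_iff two_ne_zero |>.mp hsq
    have e10 : fderiv ℝ u x (EuclideanSpace.single 1 1) 0 = 0 := by
      have hsq : fderiv ℝ u x (EuclideanSpace.single 1 1) 0 ^ 2 = 0 :=
        le_antisymm (by nlinarith [sq_nonneg (fderiv ℝ u x (EuclideanSpace.single 0 1) 0), sq_nonneg ((p * fderiv ℝ u x (EuclideanSpace.single 0 1) 0 + q * fderiv ℝ u x (EuclideanSpace.single 1 1) 0)), sq_nonneg (fderiv ℝ u x (EuclideanSpace.single 0 1) 1), sq_nonneg (fderiv ℝ u x (EuclideanSpace.single 1 1) 1), sq_nonneg ((p * fderiv ℝ u x (EuclideanSpace.single 0 1) 1 + q * fderiv ℝ u x (EuclideanSpace.single 1 1) 1)), sq_nonneg (fderiv ℝ u x (EuclideanSpace.single 0 1) 2), sq_nonneg (fderiv ℝ u x (EuclideanSpace.single 1 1) 2), sq_nonneg ((p * fderiv ℝ u x (EuclideanSpace.single 0 1) 2 + q * fderiv ℝ u x (EuclideanSpace.single 1 1) 2))]) (sq_nonneg _)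
      exact pow_eq_zero_iff two_ne_zero |>.mp hsq
    have e11 : fderiv ℝ u x (EuclideanSpace.single 1 1) 1 = 0 := by
      have hsq : fderiv ℝ u x (EuclideanSpace.single 1 1) 1 ^ 2 = 0 :=
        le_antisymm (by nlinarith [sq_nonneg (fderiv ℝ u x (EuclideanSpace.single 0 1) 0), sq_nonneg (fderiv ℝ u x (EuclideanSpace.single 1 1) 0), sq_nonneg ((p * fderiv ℝ u x (EuclideanSpace.single 0 1) 0 + q * fderiv ℝ u x (EuclideanSpace.single 1 1) 0)), sq_nonneg (fderiv ℝ u x (EuclideanSpace.single 0 1) 1), sq_nonneg ((p * fderiv ℝ u x (EuclideanSpace.single 0 1) 1 + q * fderiv ℝ u x (EuclideanSpace.single 1 1) 1)), sq_nonneg (fderiv ℝ u x (EuclideanSpace.single 0 1) 2), sq_nonneg (fderiv ℝ u x (EuclideanSpace.single 1 1) 2), sq_nonneg ((p * fderiv ℝ u x (EuclideanSpace.single 0 1) 2 + q * fderiv ℝ u x (EuclideanSpace.single 1 1) 2))]) (sq_nonneg _)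
      exact pow_eq_zero_iff two_ne_zero |>.mp hsq
    have e12 : fderiv ℝ u x (EuclideanSpace.single 1 1) 2 = 0 := by
      have hsq : fderiv ℝ u x (EuclideanSpace.single 1 1) 2 ^ 2 = 0 :=
        le_antisymm (by nlinarith [sq_nonneg (fderiv ℝ u x (EuclideanSpace.single 0 1) 0), sq_nonneg (fderiv ℝ u x (EuclideanSpace.single 1 1) 0), sq_nonneg ((p * fderiv ℝ u x (EuclideanSpace.single 0 1) 0 + q * fderiv ℝ u x (EuclideanSpace.single 1 1) 0)), sq_nonneg (fderiv ℝ u x (EuclideanSpace.single 0 1) 1), sq_nonneg (fderiv ℝ u x (EuclideanSpace.single 1 1) 1), sq_nonneg ((p * fderiv ℝ u x (EuclideanSpace.single 0 1) 1 + q * fderiv ℝ u x (EuclideanSpace.single 1 1) 1)), sq_nonneg (fderiv ℝ u x (EuclideanSpace.single 0 1) 2), sq_nonneg ((p * fderiv ℝ u x (EuclideanSpace.single 0 1) 2 + q * fderiv ℝ u x (EuclideanSpace.single 1 1) 2))]) (sq_nonneg _)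
      exact pow_eq_zero_iff two_ne_zero |>.mp hsq
    ext i
    fin_cases j <;> fin_cases i <;>
      first
        | exact e00 | exact e01 | exact e02 | exact e10 | exact e11 | exact e12
  have hfz : ∀ x : X2, fderiv ℝ u x = 0 := by
    intro x
    apply ContinuousLinearMap.ext
    intro w
    have hw : w = w 0 • (EuclideanSpace.single 0 1 : X2) + w 1 • EuclideanSpace.single 1 1 := by
      ext jj
      fin_cases jj <;>
        simp [EuclideanSpace.single_apply]
    rw [hw, (fderiv ℝ u x).map_add, (fderiv ℝ u x).map_smul, (fderiv ℝ u x).map_smul,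
      hdz x 0, hdz x 1]
    simp
  obtain ⟨z, hz⟩ := Set.ne_univ_iff_exists_notMem _ |>.mp (IsCompact.ne_univ hsupp)
  funext x
  have hx := is_const_of_fderiv_eq_zero (𝕜 := ℝ) hud hfz x z
  rw [image_eq_zero_of_notMem_tsupport hz] at hx
  simpa using hx
end

section
/- There exists a constant C > 0 such that for every continuously differentiable compactly supported function v : ℝ² → ℝ, ‖v‖_{L⁴(ℝ²)} ≤ C · ‖v‖_{L²(ℝ²)}^{1/2} · ‖∇v‖_{L²(ℝ²)}^{1/2}, equivalently ∫_{ℝ²} v⁴ dx ≤ C⁴ (∫_{ℝ²} v² dx) (∫_{ℝ²} |∇v|² dx). -/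
open MeasureTheory ENNReal


theorem key (v : (EuclideanSpace ℝ (Fin 2)) → ℝ) (hv : ContDiff ℝ 1 v) (hs : HasCompactSupport v) :
    ∫⁻ x, (‖v x‖₊ : ℝ≥0∞) ^ (4:ℕ) ≤
      (4 * lintegralPowLePowLIntegralFDerivConst (volume : Measure (EuclideanSpace ℝ (Fin 2))) 2) *
        ((∫⁻ x, (‖v x‖₊ : ℝ≥0∞) ^ (2:ℕ)) * ∫⁻ x, (‖fderiv ℝ v x‖₊ : ℝ≥0∞) ^ (2:ℕ)) := by
  set C := (lintegralPowLePowLIntegralFDerivConst (volume : Measure (EuclideanSpace ℝ (Fin 2))) 2 : ℝ≥0∞) with hC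
  set u : (EuclideanSpace ℝ (Fin 2)) → ℝ := fun x => v x * v x with hu_def
  have hu : ContDiff ℝ 1 u := hv.mul hv
  have hsu : HasCompactSupport u := hs.mul_right
  have hp : Real.HolderConjugate (Module.finrank ℝ (EuclideanSpace ℝ (Fin 2))) 2 := by
    rw [finrank_euclideanSpace_fin]
    exact Real.holderConjugate_iff.mpr ⟨one_lt_two, by norm_num⟩
  have main := lintegral_pow_le_pow_lintegral_fderiv (volume : Measure (EuclideanSpace ℝ (Fin 2))) hu hsu hp
  have hmeasv : AEMeasurable (fun x => (‖v x‖₊ : ℝ≥0∞)) (volume : Measure (EuclideanSpace ℝ (Fin 2))) :=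
    hv.continuous.measurable.nnnorm.coe_nnreal_ennreal.aemeasurable
  have hmeasd : AEMeasurable (fun x => (‖fderiv ℝ v x‖₊ : ℝ≥0∞)) (volume : Measure (EuclideanSpace ℝ (Fin 2))) :=
    (hv.continuous_fderiv one_ne_zero).measurable.nnnorm.coe_nnreal_ennreal.aemeasurable
  -- rewrite LHS of main
  have hL : (∫⁻ x, (‖u x‖₊ : ℝ≥0∞) ^ (2:ℝ)) = ∫⁻ x, (‖v x‖₊ : ℝ≥0∞) ^ (4:ℕ) := by
    refine lintegral_congr fun x => ?_
    rw [hu_def]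
    push_cast [nnnorm_mul]
    rw [ENNReal.rpow_two]
    ring
  -- bound on fderiv of u
  have hD : ∀ x, (‖fderiv ℝ u x‖₊ : ℝ≥0∞) ≤ 2 * (‖v x‖₊ * ‖fderiv ℝ v x‖₊) := by
    intro x
    have hdv : DifferentiableAt ℝ v x := hv.differentiable one_ne_zero x
    have : fderiv ℝ u x = v x • fderiv ℝ v x + v x • fderiv ℝ v x := by
      rw [hu_def, fderiv_fun_mul hdv hdv]
    rw [this]
    calc (‖v x • fderiv ℝ v x + v x • fderiv ℝ v x‖₊ : ℝ≥0∞)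
        ≤ (‖v x • fderiv ℝ v x‖₊ : ℝ≥0∞) + ‖v x • fderiv ℝ v x‖₊ := by
          exact_mod_cast nnnorm_add_le _ _
      _ = 2 * (‖v x‖₊ * ‖fderiv ℝ v x‖₊) := by
          rw [nnnorm_smul]; push_cast; ring
  -- Cauchy–Schwarz
  have hCS : (∫⁻ x, (‖v x‖₊ : ℝ≥0∞) * ‖fderiv ℝ v x‖₊) ≤
      (∫⁻ x, (‖v x‖₊ : ℝ≥0∞) ^ (2:ℕ)) ^ ((1:ℝ)/2) *
        (∫⁻ x, (‖fderiv ℝ v x‖₊ : ℝ≥0∞) ^ (2:ℕ)) ^ ((1:ℝ)/2) := by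
    have := ENNReal.lintegral_mul_le_Lp_mul_Lq (volume : Measure (EuclideanSpace ℝ (Fin 2)))
      (Real.holderConjugate_iff.mpr ⟨one_lt_two, by norm_num⟩ : Real.HolderConjugate 2 2) hmeasv hmeasd
    simpa [ENNReal.rpow_two] using this
  have hI : (∫⁻ x, (‖fderiv ℝ u x‖₊ : ℝ≥0∞)) ≤
      2 * ((∫⁻ x, (‖v x‖₊ : ℝ≥0∞) ^ (2:ℕ)) ^ ((1:ℝ)/2) *
        (∫⁻ x, (‖fderiv ℝ v x‖₊ : ℝ≥0∞) ^ (2:ℕ)) ^ ((1:ℝ)/2)) := by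
    calc (∫⁻ x, (‖fderiv ℝ u x‖₊ : ℝ≥0∞))
        ≤ ∫⁻ x, 2 * ((‖v x‖₊ : ℝ≥0∞) * ‖fderiv ℝ v x‖₊) := lintegral_mono hD
      _ = 2 * ∫⁻ x, (‖v x‖₊ : ℝ≥0∞) * ‖fderiv ℝ v x‖₊ := lintegral_const_mul' _ _ (by simp)
      _ ≤ _ := by gcongr
  calc (∫⁻ x, (‖v x‖₊ : ℝ≥0∞) ^ (4:ℕ)) = ∫⁻ x, (‖u x‖₊ : ℝ≥0∞) ^ (2:ℝ) := hL.symm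
    _ ≤ C * (∫⁻ x, (‖fderiv ℝ u x‖₊ : ℝ≥0∞)) ^ (2:ℝ) := main
    _ ≤ C * (2 * ((∫⁻ x, (‖v x‖₊ : ℝ≥0∞) ^ (2:ℕ)) ^ ((1:ℝ)/2) *
        (∫⁻ x, (‖fderiv ℝ v x‖₊ : ℝ≥0∞) ^ (2:ℕ)) ^ ((1:ℝ)/2))) ^ (2:ℝ) := by
      gcongr
    _ = (4 * C) * ((∫⁻ x, (‖v x‖₊ : ℝ≥0∞) ^ (2:ℕ)) * ∫⁻ x, (‖fderiv ℝ v x‖₊ : ℝ≥0∞) ^ (2:ℕ)) := by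
      rw [ENNReal.rpow_two, mul_pow, mul_pow,
        ← ENNReal.rpow_natCast ((∫⁻ x, (‖v x‖₊ : ℝ≥0∞) ^ (2:ℕ)) ^ ((1:ℝ)/2)) 2,
        ← ENNReal.rpow_natCast ((∫⁻ x, (‖fderiv ℝ v x‖₊ : ℝ≥0∞) ^ (2:ℕ)) ^ ((1:ℝ)/2)) 2,
        ← ENNReal.rpow_mul, ← ENNReal.rpow_mul]
      norm_num [ENNReal.rpow_one]
      ring

/-- The two-dimensional Ladyzhenskaya (Gagliardo–Nirenberg) inequality: there is
a constant `C > 0` such that `‖v‖_{L⁴(ℝ²)} ≤ C‖v‖_{L²}^{1/2}‖∇v‖_{L²}^{1/2}` for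
every `C¹` compactly supported `v : ℝ² → ℝ`. -/
theorem stmt_10 :
    ∃ C : ℝ, 0 < C ∧
      ∀ v : EuclideanSpace ℝ (Fin 2) → ℝ,
        ContDiff ℝ 1 v → HasCompactSupport v →
        (∫ x : EuclideanSpace ℝ (Fin 2), (v x) ^ 4) ^ ((1 : ℝ) / 4) ≤
          C * (Real.sqrt (∫ x : EuclideanSpace ℝ (Fin 2), (v x) ^ 2)) ^ ((1 : ℝ) / 2) *
            (Real.sqrt (∫ x : EuclideanSpace ℝ (Fin 2), ‖fderiv ℝ v x‖ ^ 2)) ^ ((1 : ℝ) / 2) := by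
  set K : ℝ := ((4 * lintegralPowLePowLIntegralFDerivConst (volume : Measure (EuclideanSpace ℝ (Fin 2))) 2 : ℝ≥0∞)).toReal + 1
    with hK_def
  have hK1 : 1 ≤ K := by
    have : (0:ℝ) ≤ ((4 * lintegralPowLePowLIntegralFDerivConst (volume : Measure (EuclideanSpace ℝ (Fin 2))) 2 : ℝ≥0∞)).toReal :=
      ENNReal.toReal_nonneg
    linarith
  have hK0 : 0 < K := lt_of_lt_of_le one_pos hK1
  refine ⟨K ^ ((1:ℝ)/4), Real.rpow_pos_of_pos hK0 _, fun v hv hs => ?_⟩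
  -- notation
  set A : ℝ := ∫ x : (EuclideanSpace ℝ (Fin 2)), (v x) ^ 4 with hA_def
  set B : ℝ := ∫ x : (EuclideanSpace ℝ (Fin 2)), (v x) ^ 2 with hB_def
  set D : ℝ := ∫ x : (EuclideanSpace ℝ (Fin 2)), ‖fderiv ℝ v x‖ ^ 2 with hD_def
  have hB0 : 0 ≤ B := integral_nonneg fun x => sq_nonneg _
  have hD0 : 0 ≤ D := integral_nonneg fun x => sq_nonneg _
  have hA0 : 0 ≤ A := integral_nonneg fun x => by positivity
  -- integrability
  have hcont_d : Continuous (fderiv ℝ v) := hv.continuous_fderiv one_ne_zero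
  have hs2 : HasCompactSupport (fun x : (EuclideanSpace ℝ (Fin 2)) => (v x) ^ 2) :=
    hs.comp_left (g := fun t : ℝ => t ^ 2) (by simp)
  have hs4 : HasCompactSupport (fun x : (EuclideanSpace ℝ (Fin 2)) => (v x) ^ 4) :=
    hs.comp_left (g := fun t : ℝ => t ^ 4) (by simp)
  have hsd : HasCompactSupport (fun x : (EuclideanSpace ℝ (Fin 2)) => ‖fderiv ℝ v x‖ ^ 2) :=
    (hs.fderiv ℝ).comp_left (g := fun t => ‖t‖ ^ 2) (by simp)
  have hint2 : Integrable (fun x : (EuclideanSpace ℝ (Fin 2)) => (v x) ^ 2) :=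
    (hv.continuous.pow 2).integrable_of_hasCompactSupport hs2
  have hint4 : Integrable (fun x : (EuclideanSpace ℝ (Fin 2)) => (v x) ^ 4) :=
    (hv.continuous.pow 4).integrable_of_hasCompactSupport hs4
  have hintd : Integrable (fun x : (EuclideanSpace ℝ (Fin 2)) => ‖fderiv ℝ v x‖ ^ 2) :=
    (hcont_d.norm.pow 2).integrable_of_hasCompactSupport hsd
  -- express real integrals as toReal of lintegrals
  have hofReal : ∀ (n : ℕ) (t : ℝ), ENNReal.ofReal (t ^ (2*n)) = (‖t‖₊ : ℝ≥0∞) ^ (2*n) := by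
    intro n t
    have h : t ^ (2*n) = |t| ^ (2*n) := by rw [pow_mul, pow_mul, sq_abs]
    rw [h, ENNReal.ofReal_pow (abs_nonneg t), ← Real.enorm_eq_ofReal_abs, enorm_eq_nnnorm]
  have hofRealN : ∀ t : ℝ, ENNReal.ofReal (t ^ 2) = (‖t‖₊ : ℝ≥0∞) ^ (2:ℕ) := by
    intro t
    simpa using hofReal 1 t
  have hA : A = (∫⁻ x, (‖v x‖₊ : ℝ≥0∞) ^ (4:ℕ)).toReal := by
    rw [hA_def, integral_eq_lintegral_of_nonneg_ae (ae_of_all _ fun x => by positivity)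
      hint4.aestronglyMeasurable]
    congr 1
    exact lintegral_congr fun x => by simpa using hofReal 2 (v x)
  have hB : B = (∫⁻ x, (‖v x‖₊ : ℝ≥0∞) ^ (2:ℕ)).toReal := by
    rw [hB_def, integral_eq_lintegral_of_nonneg_ae (ae_of_all _ fun x => sq_nonneg _)
      hint2.aestronglyMeasurable]
    congr 1
    exact lintegral_congr fun x => by simpa using hofReal 1 (v x)
  have hD : D = (∫⁻ x, (‖fderiv ℝ v x‖₊ : ℝ≥0∞) ^ (2:ℕ)).toReal := by
    rw [hD_def, integral_eq_lintegral_of_nonneg_ae (ae_of_all _ fun x => sq_nonneg _)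
      hintd.aestronglyMeasurable]
    congr 1
    refine lintegral_congr fun x => ?_
    have := hofReal 1 ‖fderiv ℝ v x‖
    simpa [nnnorm_norm] using this
  -- finiteness
  have hBfin : (∫⁻ x, (‖v x‖₊ : ℝ≥0∞) ^ (2:ℕ)) ≠ ⊤ := by
    have := (hasFiniteIntegral_iff_ofReal (ae_of_all _ fun x => sq_nonneg (v x))).1
      hint2.hasFiniteIntegral
    refine ne_of_lt (lt_of_le_of_lt (le_of_eq (lintegral_congr fun x => ?_)) this)
    exact (hofRealN (v x)).symm
  have hDfin : (∫⁻ x, (‖fderiv ℝ v x‖₊ : ℝ≥0∞) ^ (2:ℕ)) ≠ ⊤ := by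
    have := (hasFiniteIntegral_iff_ofReal (ae_of_all _ fun x => sq_nonneg ‖fderiv ℝ v x‖)).1
      hintd.hasFiniteIntegral
    refine ne_of_lt (lt_of_le_of_lt (le_of_eq (lintegral_congr fun x => ?_)) this)
    have h := hofRealN ‖fderiv ℝ v x‖
    rw [nnnorm_norm] at h
    exact h.symm
  -- real inequality A ≤ K * B * D
  have hmain : A ≤ K * (B * D) := by
    have hkey := key v hv hs
    have h1 : A ≤ ((4 * lintegralPowLePowLIntegralFDerivConst (volume : Measure (EuclideanSpace ℝ (Fin 2))) 2 : ℝ≥0∞) *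
        ((∫⁻ x, (‖v x‖₊ : ℝ≥0∞) ^ (2:ℕ)) * ∫⁻ x, (‖fderiv ℝ v x‖₊ : ℝ≥0∞) ^ (2:ℕ))).toReal := by
      rw [hA]
      refine ENNReal.toReal_mono ?_ hkey
      refine ENNReal.mul_ne_top ?_ (ENNReal.mul_ne_top hBfin hDfin)
      simp [ENNReal.mul_eq_top]
    simp only [ENNReal.toReal_mul] at h1
    rw [← hB, ← hD] at h1
    refine h1.trans ?_
    have : ((4 * lintegralPowLePowLIntegralFDerivConst (volume : Measure (EuclideanSpace ℝ (Fin 2))) 2 : ℝ≥0∞)).toReal ≤ K := by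
      rw [hK_def]; linarith
    exact mul_le_mul_of_nonneg_right this (mul_nonneg hB0 hD0)
  -- conclude via rpow algebra
  have hsB : Real.sqrt B = B ^ ((1:ℝ)/2) := Real.sqrt_eq_rpow B
  have hsD : Real.sqrt D = D ^ ((1:ℝ)/2) := Real.sqrt_eq_rpow D
  rw [hsB, hsD, ← Real.rpow_mul hB0, ← Real.rpow_mul hD0]
  have h12 : (1:ℝ)/2 * (1/2) = 1/4 := by norm_num
  rw [h12]
  calc A ^ ((1:ℝ)/4) ≤ (K * (B * D)) ^ ((1:ℝ)/4) :=
        Real.rpow_le_rpow hA0 hmain (by norm_num)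
    _ = K ^ ((1:ℝ)/4) * (B ^ ((1:ℝ)/4) * D ^ ((1:ℝ)/4)) := by
        rw [Real.mul_rpow hK0.le (mul_nonneg hB0 hD0), Real.mul_rpow hB0 hD0]
    _ = K ^ ((1:ℝ)/4) * B ^ ((1:ℝ)/4) * D ^ ((1:ℝ)/4) := by ring
end

section
/- Let p, q ∈ ℝ and let u, v : ℝ² → ℝ³ be continuously differentiable compactly supported maps, each satisfying the projected divergence-free condition (∂₁(u₁ − p·u₃) + ∂₂(u₂ − q·u₃) = 0 and ∂₁(v₁ − p·v₃) + ∂₂(v₂ − q·v₃) = 0 on ℝ²), and set w = u − v. Then ∫_{ℝ²} Σ_{i=1}^{3} [ (u₁ − p·u₃)·∂₁uᵢ − (v₁ − p·v₃)·∂₁vᵢ + (u₂ − q·u₃)·∂₂uᵢ − (v₂ − q·v₃)·∂₂vᵢ ]·wᵢ dx = ∫_{ℝ²} Σ_{i=1}^{3} [ (w₁ − p·w₃)·∂₁uᵢ + (w₂ − q·w₃)·∂₂uᵢ ]·wᵢ dx. -/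
open MeasureTheory

section Stmt15Aux

variable {p q : ℝ}

local notation "E2" => EuclideanSpace ℝ (Fin 2)
local notation "E3" => EuclideanSpace ℝ (Fin 3)

private lemma fderiv_coord_aux {g : E2 → E3} (hg : Differentiable ℝ g) (i : Fin 3) (x e : E2) :
    fderiv ℝ (fun y => g y i) x e = fderiv ℝ g x e i := by
  have h : HasFDerivAt (fun y => g y i)
      ((EuclideanSpace.proj i (𝕜 := ℝ)).comp (fderiv ℝ g x)) x :=
    (EuclideanSpace.proj i (𝕜 := ℝ)).hasFDerivAt.comp x (hg x).hasFDerivAt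
  rw [h.fderiv]; rfl

private lemma cont_fderiv_aux {g : E2 → ℝ} (hg : ContDiff ℝ 1 g) (e : E2) :
    Continuous fun x => fderiv ℝ g x e :=
  ((hg.fderiv_right (m := 0) (by norm_num)).continuous).clm_apply continuous_const

private lemma contD_aux {g : E2 → E3} (hg : ContDiff ℝ 1 g) (e : E2) (i : Fin 3) :
    Continuous fun x => fderiv ℝ g x e i :=
  (EuclideanSpace.proj i (𝕜 := ℝ)).continuous.comp
    (((hg.fderiv_right (m := 0) (by norm_num)).continuous).clm_apply continuous_const)

private lemma contCoord_aux {g : E2 → E3} (hg : Continuous g) (i : Fin 3) :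
    Continuous fun x => g x i :=
  (EuclideanSpace.proj i (𝕜 := ℝ)).continuous.comp hg

/-- Integration by parts on `ℝ²` for compactly supported `C¹` scalar functions. -/
private lemma ibp_aux (A f : E2 → ℝ) (e : E2)
    (hA : ContDiff ℝ 1 A) (hAs : HasCompactSupport A)
    (hf : ContDiff ℝ 1 f) (hfs : HasCompactSupport f) :
    ∫ x : E2, A x * fderiv ℝ f x e = - ∫ x : E2, fderiv ℝ A x e * f x := by
  have cA := hA.continuous
  have cf := hf.continuous
  have cA' := cont_fderiv_aux hA e
  have cf' := cont_fderiv_aux hf e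
  have h1 : Integrable (fun x : E2 => fderiv ℝ A x e * f x) :=
    (cA'.mul cf).integrable_of_hasCompactSupport (hfs.mul_left)
  have h2 : Integrable (fun x : E2 => A x * fderiv ℝ f x e) :=
    (cA.mul cf').integrable_of_hasCompactSupport (hAs.mul_right)
  have h3 : Integrable (fun x : E2 => A x * f x) :=
    (cA.mul cf).integrable_of_hasCompactSupport (hAs.mul_right)
  exact integral_mul_fderiv_eq_neg_fderiv_mul_of_integrable h1 h2 h3
    (fun x _ => hA.differentiable one_ne_zero x) (fun x _ => hf.differentiable one_ne_zero x)

/-- Key cancellation: if `div (A, B) = 0` then `∫ (A ∂₁f + B ∂₂f) f = 0`. -/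
private lemma key_aux (A B f : E2 → ℝ)
    (hA : ContDiff ℝ 1 A) (hAs : HasCompactSupport A)
    (hB : ContDiff ℝ 1 B) (hBs : HasCompactSupport B)
    (hf : ContDiff ℝ 1 f) (hfs : HasCompactSupport f)
    (hdiv : ∀ x : E2, fderiv ℝ A x (EuclideanSpace.single 0 1)
      + fderiv ℝ B x (EuclideanSpace.single 1 1) = 0) :
    ∫ x : E2, (A x * fderiv ℝ f x (EuclideanSpace.single 0 1)
      + B x * fderiv ℝ f x (EuclideanSpace.single 1 1)) * f x = 0 := by
  set e₀ : E2 := EuclideanSpace.single 0 1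
  set e₁ : E2 := EuclideanSpace.single 1 1
  set g : E2 → ℝ := fun x => f x * f x with hg_def
  have hg : ContDiff ℝ 1 g := hf.mul hf
  have hgs : HasCompactSupport g := hfs.mul_right
  have hdf := hf.differentiable one_ne_zero
  have hgd : ∀ x (e : E2), fderiv ℝ g x e = 2 * (f x * fderiv ℝ f x e) := by
    intro x e
    have h := fderiv_fun_mul (hdf x) (hdf x)
    have := congrFun (congrArg DFunLike.coe h) e
    simp only [ContinuousLinearMap.add_apply, ContinuousLinearMap.smul_apply,
      smul_eq_mul] at this
    rw [hg_def]
    rw [this]; ring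
  have e1 : ∫ x : E2, A x * fderiv ℝ g x e₀ = - ∫ x : E2, fderiv ℝ A x e₀ * g x :=
    ibp_aux A g e₀ hA hAs hg hgs
  have e2 : ∫ x : E2, B x * fderiv ℝ g x e₁ = - ∫ x : E2, fderiv ℝ B x e₁ * g x :=
    ibp_aux B g e₁ hB hBs hg hgs
  have cg := hg.continuous
  have iA : Integrable (fun x : E2 => A x * fderiv ℝ g x e₀) :=
    (hA.continuous.mul (cont_fderiv_aux hg e₀)).integrable_of_hasCompactSupport hAs.mul_right
  have iB : Integrable (fun x : E2 => B x * fderiv ℝ g x e₁) :=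
    (hB.continuous.mul (cont_fderiv_aux hg e₁)).integrable_of_hasCompactSupport hBs.mul_right
  have iA' : Integrable (fun x : E2 => fderiv ℝ A x e₀ * g x) :=
    ((cont_fderiv_aux hA e₀).mul cg).integrable_of_hasCompactSupport hgs.mul_left
  have iB' : Integrable (fun x : E2 => fderiv ℝ B x e₁ * g x) :=
    ((cont_fderiv_aux hB e₁).mul cg).integrable_of_hasCompactSupport hgs.mul_left
  have hsum : (∫ x : E2, fderiv ℝ A x e₀ * g x) + ∫ x : E2, fderiv ℝ B x e₁ * g x = 0 := by
    rw [← integral_add iA' iB']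
    have : (fun x : E2 => fderiv ℝ A x e₀ * g x + fderiv ℝ B x e₁ * g x)
        = fun _ : E2 => (0 : ℝ) := by
      funext x
      have h := hdiv x
      have : (fderiv ℝ A x e₀ + fderiv ℝ B x e₁) * g x = 0 := by rw [h]; ring
      nlinarith [this]
    rw [this, integral_zero]
  have hrw : (fun x : E2 => (A x * fderiv ℝ f x e₀ + B x * fderiv ℝ f x e₁) * f x)
      = fun x : E2 => (1 / 2 : ℝ) * (A x * fderiv ℝ g x e₀)
        + (1 / 2 : ℝ) * (B x * fderiv ℝ g x e₁) := by
    funext x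
    rw [hgd x e₀, hgd x e₁]; ring
  rw [hrw]
  rw [integral_add (iA.const_mul _) (iB.const_mul _), integral_const_mul, integral_const_mul,
    e1, e2]
  linarith [hsum]

end Stmt15Aux

/-- Cancellation identity in the uniqueness proof for the projected problem:
for two `C¹` compactly supported projected divergence-free maps `u, v : ℝ² → ℝ³`
and `w = u - v`, the difference of the two nonlinear terms tested against `w`
reduces to `∫ Σᵢ [(w₁-p·w₃)∂₁uᵢ + (w₂-q·w₃)∂₂uᵢ]·wᵢ dx`. -/
theorem stmt_15 (p q : ℝ)
    (u v : EuclideanSpace ℝ (Fin 2) → EuclideanSpace ℝ (Fin 3))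
    (hu : ContDiff ℝ 1 u) (husupp : HasCompactSupport u)
    (hv : ContDiff ℝ 1 v) (hvsupp : HasCompactSupport v)
    (hdivu : ∀ x : EuclideanSpace ℝ (Fin 2),
      (fderiv ℝ u x (EuclideanSpace.single 0 1) 0 -
          p * fderiv ℝ u x (EuclideanSpace.single 0 1) 2) +
        (fderiv ℝ u x (EuclideanSpace.single 1 1) 1 -
          q * fderiv ℝ u x (EuclideanSpace.single 1 1) 2) = 0)
    (hdivv : ∀ x : EuclideanSpace ℝ (Fin 2),
      (fderiv ℝ v x (EuclideanSpace.single 0 1) 0 -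
          p * fderiv ℝ v x (EuclideanSpace.single 0 1) 2) +
        (fderiv ℝ v x (EuclideanSpace.single 1 1) 1 -
          q * fderiv ℝ v x (EuclideanSpace.single 1 1) 2) = 0) :
    (∫ x : EuclideanSpace ℝ (Fin 2), ∑ i : Fin 3,
        ((u x 0 - p * u x 2) * fderiv ℝ u x (EuclideanSpace.single 0 1) i -
          (v x 0 - p * v x 2) * fderiv ℝ v x (EuclideanSpace.single 0 1) i +
          (u x 1 - q * u x 2) * fderiv ℝ u x (EuclideanSpace.single 1 1) i -
          (v x 1 - q * v x 2) * fderiv ℝ v x (EuclideanSpace.single 1 1) i) *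
          (u x i - v x i)) =
      ∫ x : EuclideanSpace ℝ (Fin 2), ∑ i : Fin 3,
        (((u x 0 - v x 0) - p * (u x 2 - v x 2)) *
            fderiv ℝ u x (EuclideanSpace.single 0 1) i +
          ((u x 1 - v x 1) - q * (u x 2 - v x 2)) *
            fderiv ℝ u x (EuclideanSpace.single 1 1) i) *
          (u x i - v x i) := by
  have du := hu.differentiable one_ne_zero
  have dv := hv.differentiable one_ne_zero
  have hcu : ∀ i : Fin 3, ContDiff ℝ 1 (fun x => u x i) := fun i => contDiff_euclidean.mp hu i
  have hcv : ∀ i : Fin 3, ContDiff ℝ 1 (fun x => v x i) := fun i => contDiff_euclidean.mp hv i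
  set e₀ : EuclideanSpace ℝ (Fin 2) := EuclideanSpace.single 0 1 with he₀
  set e₁ : EuclideanSpace ℝ (Fin 2) := EuclideanSpace.single 1 1 with he₁
  set A : EuclideanSpace ℝ (Fin 2) → ℝ := fun x => v x 0 - p * v x 2 with hA_def
  set B : EuclideanSpace ℝ (Fin 2) → ℝ := fun x => v x 1 - q * v x 2 with hB_def
  have hA : ContDiff ℝ 1 A := (hcv 0).sub ((hcv 2).const_smul p)
  have hB : ContDiff ℝ 1 B := (hcv 1).sub ((hcv 2).const_smul q)
  have hAs : HasCompactSupport A := by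
    apply HasCompactSupport.intro hvsupp
    intro x hx
    have hv0 : v x = 0 := image_eq_zero_of_notMem_tsupport hx
    have hz : ∀ i : Fin 3, (0 : EuclideanSpace ℝ (Fin 3)) i = 0 := fun _ => rfl
    simp only [hA_def, hv0, hz]; ring
  have hBs : HasCompactSupport B := by
    apply HasCompactSupport.intro hvsupp
    intro x hx
    have hv0 : v x = 0 := image_eq_zero_of_notMem_tsupport hx
    have hz : ∀ i : Fin 3, (0 : EuclideanSpace ℝ (Fin 3)) i = 0 := fun _ => rfl
    simp only [hB_def, hv0, hz]; ring
  have hAder : ∀ (x e : EuclideanSpace ℝ (Fin 2)),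
      fderiv ℝ A x e = fderiv ℝ v x e 0 - p * fderiv ℝ v x e 2 := by
    intro x e
    have d0 : DifferentiableAt ℝ (fun y => v y 0) x := (hcv 0).differentiable one_ne_zero x
    have d2 : DifferentiableAt ℝ (fun y => v y 2) x := (hcv 2).differentiable one_ne_zero x
    have h1 : fderiv ℝ A x = fderiv ℝ (fun y => v y 0) x - p • fderiv ℝ (fun y => v y 2) x := by
      simp only [hA_def]
      rw [fderiv_fun_sub d0 (d2.const_mul p), fderiv_const_mul d2]
    rw [h1, ContinuousLinearMap.sub_apply, ContinuousLinearMap.smul_apply, smul_eq_mul,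
      fderiv_coord_aux dv 0 x e, fderiv_coord_aux dv 2 x e]
  have hBder : ∀ (x e : EuclideanSpace ℝ (Fin 2)),
      fderiv ℝ B x e = fderiv ℝ v x e 1 - q * fderiv ℝ v x e 2 := by
    intro x e
    have d1 : DifferentiableAt ℝ (fun y => v y 1) x := (hcv 1).differentiable one_ne_zero x
    have d2 : DifferentiableAt ℝ (fun y => v y 2) x := (hcv 2).differentiable one_ne_zero x
    have h1 : fderiv ℝ B x = fderiv ℝ (fun y => v y 1) x - q • fderiv ℝ (fun y => v y 2) x := by
      simp only [hB_def]
      rw [fderiv_fun_sub d1 (d2.const_mul q), fderiv_const_mul d2]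
    rw [h1, ContinuousLinearMap.sub_apply, ContinuousLinearMap.smul_apply, smul_eq_mul,
      fderiv_coord_aux dv 1 x e, fderiv_coord_aux dv 2 x e]
  have hdivAB : ∀ x : EuclideanSpace ℝ (Fin 2),
      fderiv ℝ A x e₀ + fderiv ℝ B x e₁ = 0 := by
    intro x
    rw [hAder x e₀, hBder x e₁]
    linarith [hdivv x]
  -- the difference functions
  have hfC : ∀ i : Fin 3, ContDiff ℝ 1 (fun x => u x i - v x i) :=
    fun i => (hcu i).sub (hcv i)
  have hKuv : IsCompact (tsupport u ∪ tsupport v) := husupp.union hvsupp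
  have hzero : ∀ x, x ∉ tsupport u ∪ tsupport v → u x = 0 ∧ v x = 0 := by
    intro x hx
    exact ⟨image_eq_zero_of_notMem_tsupport (fun h => hx (Or.inl h)),
      image_eq_zero_of_notMem_tsupport (fun h => hx (Or.inr h))⟩
  have hz3 : ∀ i : Fin 3, (0 : EuclideanSpace ℝ (Fin 3)) i = 0 := fun _ => rfl
  have hfS : ∀ i : Fin 3, HasCompactSupport (fun x => u x i - v x i) := by
    intro i
    apply HasCompactSupport.intro hKuv
    intro x hx
    obtain ⟨h1, h2⟩ := hzero x hx
    simp only [h1, h2, hz3, sub_self]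
  have hwder : ∀ (i : Fin 3) (x e : EuclideanSpace ℝ (Fin 2)),
      fderiv ℝ (fun y => u y i - v y i) x e = fderiv ℝ u x e i - fderiv ℝ v x e i := by
    intro i x e
    rw [fderiv_fun_sub ((hcu i).differentiable one_ne_zero x) ((hcv i).differentiable one_ne_zero x),
      ContinuousLinearMap.sub_apply, fderiv_coord_aux du i x e, fderiv_coord_aux dv i x e]
  have keyi : ∀ i : Fin 3, ∫ x : EuclideanSpace ℝ (Fin 2),
      (A x * (fderiv ℝ u x e₀ i - fderiv ℝ v x e₀ i)
        + B x * (fderiv ℝ u x e₁ i - fderiv ℝ v x e₁ i)) * (u x i - v x i) = 0 := by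
    intro i
    have hk := key_aux A B (fun x => u x i - v x i) hA hAs hB hBs (hfC i) (hfS i) hdivAB
    have hfun : (fun x : EuclideanSpace ℝ (Fin 2) =>
        (A x * (fderiv ℝ u x e₀ i - fderiv ℝ v x e₀ i)
          + B x * (fderiv ℝ u x e₁ i - fderiv ℝ v x e₁ i)) * (u x i - v x i))
        = fun x => (A x * fderiv ℝ (fun y => u y i - v y i) x e₀
          + B x * fderiv ℝ (fun y => u y i - v y i) x e₁) * (u x i - v x i) := by
      funext x
      rw [hwder i x e₀, hwder i x e₁]
    rw [hfun]
    exact hk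
  -- continuity atoms
  have c1 : ∀ i : Fin 3, Continuous fun x => u x i := fun i => (hcu i).continuous
  have c2 : ∀ i : Fin 3, Continuous fun x => v x i := fun i => (hcv i).continuous
  have c3 : ∀ (e : EuclideanSpace ℝ (Fin 2)) (i : Fin 3),
      Continuous fun x => fderiv ℝ u x e i := fun e i => contD_aux hu e i
  have c4 : ∀ (e : EuclideanSpace ℝ (Fin 2)) (i : Fin 3),
      Continuous fun x => fderiv ℝ v x e i := fun e i => contD_aux hv e i
  -- the R and D integrands
  set R : EuclideanSpace ℝ (Fin 2) → ℝ := fun x => ∑ i : Fin 3,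
      (((u x 0 - v x 0) - p * (u x 2 - v x 2)) * fderiv ℝ u x e₀ i +
        ((u x 1 - v x 1) - q * (u x 2 - v x 2)) * fderiv ℝ u x e₁ i) *
        (u x i - v x i) with hR_def
  set D : EuclideanSpace ℝ (Fin 2) → ℝ := fun x => ∑ i : Fin 3,
      (A x * (fderiv ℝ u x e₀ i - fderiv ℝ v x e₀ i)
        + B x * (fderiv ℝ u x e₁ i - fderiv ℝ v x e₁ i)) * (u x i - v x i) with hD_def
  have cR : Continuous R := by
    apply continuous_finset_sum
    intro i _
    exact ((((c1 0).sub (c2 0)).sub (((c1 2).sub (c2 2)).const_smul p)).mul (c3 e₀ i)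
      |>.add ((((c1 1).sub (c2 1)).sub (((c1 2).sub (c2 2)).const_smul q)).mul (c3 e₁ i))).mul
      ((c1 i).sub (c2 i))
  have cD : Continuous D := by
    apply continuous_finset_sum
    intro i _
    exact ((hA.continuous.mul ((c3 e₀ i).sub (c4 e₀ i))).add
      (hB.continuous.mul ((c3 e₁ i).sub (c4 e₁ i)))).mul ((c1 i).sub (c2 i))
  have sR : HasCompactSupport R := by
    apply HasCompactSupport.intro hKuv
    intro x hx
    obtain ⟨h1, h2⟩ := hzero x hx
    apply Finset.sum_eq_zero
    intro i _
    simp only [h1, h2, hz3, sub_self, mul_zero]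
  have sD : HasCompactSupport D := by
    apply HasCompactSupport.intro hKuv
    intro x hx
    obtain ⟨h1, h2⟩ := hzero x hx
    apply Finset.sum_eq_zero
    intro i _
    simp only [h1, h2, hz3, sub_self, mul_zero]
  have iR : Integrable R := cR.integrable_of_hasCompactSupport sR
  have iD : Integrable D := cD.integrable_of_hasCompactSupport sD
  have hDi : ∀ i : Fin 3, Integrable (fun x : EuclideanSpace ℝ (Fin 2) =>
      (A x * (fderiv ℝ u x e₀ i - fderiv ℝ v x e₀ i)
        + B x * (fderiv ℝ u x e₁ i - fderiv ℝ v x e₁ i)) * (u x i - v x i)) := by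
    intro i
    apply Continuous.integrable_of_hasCompactSupport
    · exact ((hA.continuous.mul ((c3 e₀ i).sub (c4 e₀ i))).add
        (hB.continuous.mul ((c3 e₁ i).sub (c4 e₁ i)))).mul ((c1 i).sub (c2 i))
    · apply HasCompactSupport.intro hKuv
      intro x hx
      obtain ⟨h1, h2⟩ := hzero x hx
      simp only [h1, h2, hz3, sub_self, mul_zero]
  have hD0 : ∫ x : EuclideanSpace ℝ (Fin 2), D x = 0 := by
    rw [hD_def]
    rw [integral_finset_sum Finset.univ (fun i _ => hDi i)]
    exact Finset.sum_eq_zero fun i _ => keyi i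
  have hpt : (fun x : EuclideanSpace ℝ (Fin 2) => ∑ i : Fin 3,
      ((u x 0 - p * u x 2) * fderiv ℝ u x e₀ i -
        (v x 0 - p * v x 2) * fderiv ℝ v x e₀ i +
        (u x 1 - q * u x 2) * fderiv ℝ u x e₁ i -
        (v x 1 - q * v x 2) * fderiv ℝ v x e₁ i) * (u x i - v x i))
      = fun x => R x + D x := by
    funext x
    rw [hR_def, hD_def]
    rw [← Finset.sum_add_distrib]
    apply Finset.sum_congr rfl
    intro i _
    simp only [hA_def, hB_def]
    ring
  rw [hpt, integral_add iR iD, hD0, add_zero]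
end
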